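/- arXiv:1304.7539 — 2 statements merged into one kernel-verified Lean document; each statement's English description precedes it below -/
import Mathlib

section
/- Let Θ ⊆ ℝ^K be open, let x : Θ → ℂ^N be differentiable at θ ∈ Θ, let σ > 0, and for any matrix Φ ∈ ℂ^{L×N} define the Fisher information matrix F(Φ,θ) ∈ ℝ^{K×K} by F(Φ,θ)_{m,n} = (2/σ²)·Re⟨Φ ∂x(θ)/∂θ_m, Φ ∂x(θ)/∂θ_n⟩. Suppose A ∈ ℂ^{M×N} satisfies the tangent plane ε-isometry property at θ (with 0 < ε < 1). Then for every a ∈ ℝ^K, (M/N)(1−ε)² · aᵀ F(I_N,θ) a ≤ aᵀ F(A,θ) a ≤ (M/N)(1+ε)² · aᵀ F(I_N,θ) a; equivalently, F(√(M/N)(1−ε) I_N, θ) ⪯ F(A,θ) ⪯ F(√(M/N)(1+ε) I_N, θ) in the Loewner (positive semidefinite) order. -/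
open scoped BigOperators

/-- Action of an `M × N` complex matrix on `ℂ^N` with Euclidean norms. -/
noncomputable def mulVecE {M N : ℕ} (A : Matrix (Fin M) (Fin N) ℂ)
    (v : EuclideanSpace ℂ (Fin N)) : EuclideanSpace ℂ (Fin M) :=
  WithLp.toLp 2 (fun i => ∑ j, A i j * v j)

/-- Fisher information matrix entry for estimating `θ ∈ ℝ^K` from `Φ x(θ)` in complex AWGN
of per-sample variance `σ²`:  `F(Φ,θ)_{m,n} = (2/σ²) Re ⟨Φ ∂x(θ)/∂θ_m, Φ ∂x(θ)/∂θ_n⟩`. -/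
noncomputable def FIM {K L N : ℕ} (σ : ℝ) (x : (Fin K → ℝ) → EuclideanSpace ℂ (Fin N))
    (θ : Fin K → ℝ) (Φ : Matrix (Fin L) (Fin N) ℂ) (m n : Fin K) : ℝ :=
  (2 / σ ^ 2) *
    (inner ℂ (mulVecE Φ (fderiv ℝ x θ (Pi.single m 1)))
      (mulVecE Φ (fderiv ℝ x θ (Pi.single n 1))) : ℂ).re

noncomputable def mulVecL {M N : ℕ} (A : Matrix (Fin M) (Fin N) ℂ) :
    EuclideanSpace ℂ (Fin N) →ₗ[ℝ] EuclideanSpace ℂ (Fin M) where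
  toFun := mulVecE A
  map_add' u v := by
    ext i
    simp [mulVecE, PiLp.add_apply, mul_add, Finset.sum_add_distrib]
  map_smul' r v := by
    ext i
    simp only [mulVecE, PiLp.toLp_apply, PiLp.smul_apply, Complex.real_smul, RingHom.id_apply, Finset.mul_sum]
    exact Finset.sum_congr rfl fun j _ => by ring
lemma mulVecE_one {N : ℕ} (v : EuclideanSpace ℂ (Fin N)) :
    mulVecE (1 : Matrix (Fin N) (Fin N) ℂ) v = v := by
  ext i
  simp [mulVecE, Matrix.one_apply, Finset.sum_ite_eq]
lemma mulVecE_sum_smul {L N K : ℕ} (Φ : Matrix (Fin L) (Fin N) ℂ)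
    (d : Fin K → EuclideanSpace ℂ (Fin N)) (a : Fin K → ℝ) :
    mulVecE Φ (∑ k, a k • d k) = ∑ k, a k • mulVecE Φ (d k) := by
  show mulVecL Φ (∑ k, a k • d k) = _
  rw [map_sum]
  exact Finset.sum_congr rfl fun k _ => (mulVecL Φ).map_smul (a k) (d k)
lemma quad_eq {L N K : ℕ} (σ : ℝ) (Φ : Matrix (Fin L) (Fin N) ℂ)
    (d : Fin K → EuclideanSpace ℂ (Fin N)) (a : Fin K → ℝ) :
    ∑ m, ∑ n, a m * ((2 / σ ^ 2) * (inner ℂ (mulVecE Φ (d m)) (mulVecE Φ (d n)) : ℂ).re) * a n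
      = (2 / σ ^ 2) * ‖mulVecE Φ (∑ k, a k • d k)‖ ^ 2 := by
  rw [mulVecE_sum_smul, ← inner_self_eq_norm_sq (𝕜 := ℂ), sum_inner, map_sum, Finset.mul_sum]
  refine Finset.sum_congr rfl fun m _ => ?_
  rw [inner_sum, map_sum, Finset.mul_sum]
  refine Finset.sum_congr rfl fun n _ => ?_
  rw [RCLike.real_smul_eq_coe_smul (K := ℂ) (a m), RCLike.real_smul_eq_coe_smul (K := ℂ) (a n),
    inner_smul_left, inner_smul_right, RCLike.conj_ofReal, RCLike.re_ofReal_mul,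
    RCLike.re_ofReal_mul, RCLike.re_to_complex]
  ring

/-- If `A` satisfies the tangent plane `ε`-isometry property at `θ`, then the Fisher
information quadratic forms with compressive measurements are sandwiched between those with
all `N` measurements at an SNR penalty of `M/N`. -/
theorem stmt0 {K M N : ℕ} (Θ : Set (Fin K → ℝ)) (hΘ : IsOpen Θ)
    (x : (Fin K → ℝ) → EuclideanSpace ℂ (Fin N)) (θ : Fin K → ℝ) (hθ : θ ∈ Θ)
    (hx : DifferentiableAt ℝ x θ) (σ : ℝ) (hσ : 0 < σ)
    (ε : ℝ) (hε0 : 0 < ε) (hε1 : ε < 1)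
    (A : Matrix (Fin M) (Fin N) ℂ)
    (hiso : ∀ a : Fin K → ℝ,
      (∑ k, a k • fderiv ℝ x θ (Pi.single k 1)) ≠ 0 →
        Real.sqrt ((M : ℝ) / N) * (1 - ε) ≤
            ‖mulVecE A (∑ k, a k • fderiv ℝ x θ (Pi.single k 1))‖ /
              ‖∑ k, a k • fderiv ℝ x θ (Pi.single k 1)‖ ∧
          ‖mulVecE A (∑ k, a k • fderiv ℝ x θ (Pi.single k 1))‖ /
              ‖∑ k, a k • fderiv ℝ x θ (Pi.single k 1)‖ ≤
            Real.sqrt ((M : ℝ) / N) * (1 + ε)) :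
    ∀ a : Fin K → ℝ,
      ((M : ℝ) / N) * (1 - ε) ^ 2 *
          ∑ m, ∑ n, a m * FIM σ x θ (1 : Matrix (Fin N) (Fin N) ℂ) m n * a n ≤
        ∑ m, ∑ n, a m * FIM σ x θ A m n * a n ∧
      ∑ m, ∑ n, a m * FIM σ x θ A m n * a n ≤
        ((M : ℝ) / N) * (1 + ε) ^ 2 *
          ∑ m, ∑ n, a m * FIM σ x θ (1 : Matrix (Fin N) (Fin N) ℂ) m n * a n := by
  intro a
  set d : Fin K → EuclideanSpace ℂ (Fin N) := fun k => fderiv ℝ x θ (Pi.single k 1) with hd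
  set v : EuclideanSpace ℂ (Fin N) := ∑ k, a k • d k with hv
  have hA : ∑ m, ∑ n, a m * FIM σ x θ A m n * a n = (2 / σ ^ 2) * ‖mulVecE A v‖ ^ 2 :=
    quad_eq σ A d a
  have h1 : ∑ m, ∑ n, a m * FIM σ x θ (1 : Matrix (Fin N) (Fin N) ℂ) m n * a n
      = (2 / σ ^ 2) * ‖v‖ ^ 2 := by
    have h := quad_eq σ (1 : Matrix (Fin N) (Fin N) ℂ) d a
    rwa [mulVecE_one] at h
  have hc2 : Real.sqrt ((M : ℝ) / N) ^ 2 = (M : ℝ) / N :=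
    Real.sq_sqrt (by positivity)
  have hσ2 : (0 : ℝ) < 2 / σ ^ 2 := by positivity
  rw [hA, h1]
  by_cases hv0 : v = 0
  · have hz : mulVecE A (0 : EuclideanSpace ℂ (Fin N)) = 0 := map_zero (mulVecL A)
    simp [hv0, hz]
  · obtain ⟨hl, hr⟩ := hiso a hv0
    have hvn : (0 : ℝ) < ‖v‖ := norm_pos_iff.mpr hv0
    have hl' : Real.sqrt ((M : ℝ) / N) * (1 - ε) * ‖v‖ ≤ ‖mulVecE A v‖ := by
      rw [← le_div_iff₀ hvn]; exact hl
    have hr' : ‖mulVecE A v‖ ≤ Real.sqrt ((M : ℝ) / N) * (1 + ε) * ‖v‖ := by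
      rw [← div_le_iff₀ hvn]; exact hr
    have hlnn : 0 ≤ Real.sqrt ((M : ℝ) / N) * (1 - ε) * ‖v‖ := by
      have : 0 ≤ (1 - ε) := by linarith
      positivity
    constructor
    · have hsq : (Real.sqrt ((M : ℝ) / N) * (1 - ε) * ‖v‖) ^ 2 ≤ ‖mulVecE A v‖ ^ 2 :=
        pow_le_pow_left₀ hlnn hl' 2
      have : ((M : ℝ) / N) * (1 - ε) ^ 2 * ((2 / σ ^ 2) * ‖v‖ ^ 2)
          = (2 / σ ^ 2) * ((Real.sqrt ((M : ℝ) / N) * (1 - ε) * ‖v‖) ^ 2) := by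
        rw [mul_pow, mul_pow, hc2]; ring
      rw [this]
      exact mul_le_mul_of_nonneg_left hsq (le_of_lt hσ2)
    · have hsq : ‖mulVecE A v‖ ^ 2 ≤ (Real.sqrt ((M : ℝ) / N) * (1 + ε) * ‖v‖) ^ 2 :=
        pow_le_pow_left₀ (norm_nonneg _) hr' 2
      have : ((M : ℝ) / N) * (1 + ε) ^ 2 * ((2 / σ ^ 2) * ‖v‖ ^ 2)
          = (2 / σ ^ 2) * ((Real.sqrt ((M : ℝ) / N) * (1 + ε) * ‖v‖) ^ 2) := by
        rw [mul_pow, mul_pow, hc2]; ring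
      rw [this]
      exact mul_le_mul_of_nonneg_left hsq (le_of_lt hσ2)
end

section
/- Let S ⊆ ℂ^N be a linear subspace, let A : ℂ^N → ℂ^M be a linear map, and let 0 < ε < 2/5. Suppose Q is a set of unit vectors in S such that for every x ∈ S with ‖x‖ = 1 there exists q ∈ Q with ‖x − q‖ ≤ ε/4, and suppose 1 − ε ≤ ‖A q‖ ≤ 1 + ε for every q ∈ Q. Then (1 − 2ε)·‖x‖ ≤ ‖A x‖ ≤ (1 + 2ε)·‖x‖ for every x ∈ S. -/
/-- Net-extension lemma: if `Q` is an `(ε/4)`-net of the unit sphere of a subspace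
`S ⊆ ℂ^N` (with `0 < ε < 2/5`) and a linear map `A : ℂ^N → ℂ^M` satisfies
`1 − ε ≤ ‖A q‖ ≤ 1 + ε` on `Q`, then `(1 − 2ε)‖x‖ ≤ ‖A x‖ ≤ (1 + 2ε)‖x‖` for all
`x ∈ S`. -/
theorem stmt14 {N M : ℕ} (S : Submodule ℂ (EuclideanSpace ℂ (Fin N)))
    (A : EuclideanSpace ℂ (Fin N) →ₗ[ℂ] EuclideanSpace ℂ (Fin M))
    (ε : ℝ) (hε0 : 0 < ε) (hε1 : ε < 2 / 5)
    (Q : Set (EuclideanSpace ℂ (Fin N)))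
    (hQunit : ∀ q ∈ Q, q ∈ S ∧ ‖q‖ = 1)
    (hnet : ∀ x ∈ S, ‖x‖ = 1 → ∃ q ∈ Q, ‖x - q‖ ≤ ε / 4)
    (hQiso : ∀ q ∈ Q, 1 - ε ≤ ‖A q‖ ∧ ‖A q‖ ≤ 1 + ε) :
    ∀ x ∈ S, (1 - 2 * ε) * ‖x‖ ≤ ‖A x‖ ∧ ‖A x‖ ≤ (1 + 2 * ε) * ‖x‖ := by
  -- A is continuous, hence bounded
  set Ac := LinearMap.toContinuousLinearMap A with hAc
  set C := ‖Ac‖ with hCdef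
  have hC : ∀ v, ‖A v‖ ≤ C * ‖v‖ := fun v => Ac.le_opNorm v
  -- the set of norms on the unit sphere of S
  set T : Set ℝ := (fun v => ‖A v‖) '' {v | v ∈ S ∧ ‖v‖ = 1} with hT
  have hbdd : BddAbove T := by
    refine ⟨C, ?_⟩
    rintro _ ⟨v, ⟨hv, hv1⟩, rfl⟩
    simpa [hv1] using hC v
  set K := sSup T with hK
  -- Key claim for unit vectors
  have key : ∀ x ∈ S, ‖x‖ = 1 → 1 - 2 * ε ≤ ‖A x‖ ∧ ‖A x‖ ≤ 1 + 2 * ε := by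
    intro x hx hx1
    have hxT : ‖A x‖ ∈ T := ⟨x, ⟨hx, hx1⟩, rfl⟩
    have hne : T.Nonempty := ⟨_, hxT⟩
    have hK0 : 0 ≤ K := le_trans (norm_nonneg _) (le_csSup hbdd hxT)
    -- For any y in S ∩ sphere, ‖A y‖ ≤ K
    have hleK : ∀ y ∈ S, ‖y‖ = 1 → ‖A y‖ ≤ K :=
      fun y hy hy1 => le_csSup hbdd ⟨y, ⟨hy, hy1⟩, rfl⟩
    -- ‖A r‖ ≤ K * ‖r‖ for r ∈ S
    have hAr : ∀ r ∈ S, ‖A r‖ ≤ K * ‖r‖ := by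
      intro r hr
      rcases eq_or_ne r 0 with rfl | hr0
      · simp
      · have hnr : (0:ℝ) < ‖r‖ := norm_pos_iff.mpr hr0
        set u : EuclideanSpace ℂ (Fin N) := (‖r‖⁻¹ : ℂ) • r with hu
        have huS : u ∈ S := S.smul_mem _ hr
        have hun : ‖u‖ = 1 := by
          rw [hu, norm_smul]
          simp [norm_inv, hnr.ne']
        have h1 : ‖A u‖ ≤ K := hleK u huS hun
        have h2 : ‖A u‖ = ‖r‖⁻¹ * ‖A r‖ := by
          rw [hu, map_smul, norm_smul]
          simp
        rw [h2] at h1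
        calc ‖A r‖ = (‖r‖⁻¹ * ‖A r‖) * ‖r‖ := by field_simp
          _ ≤ K * ‖r‖ := by
              exact mul_le_mul_of_nonneg_right h1 hnr.le
    -- step inequality
    have hstep : ∀ y ∈ S, ‖y‖ = 1 → ‖A y‖ ≤ 1 + ε + K * (ε / 4) := by
      intro y hy hy1
      obtain ⟨q, hqQ, hqd⟩ := hnet y hy hy1
      have hqS := (hQunit q hqQ).1
      have hAq := hQiso q hqQ
      have hsub : (y - q) ∈ S := S.sub_mem hy hqS
      have h1 : ‖A y‖ ≤ ‖A q‖ + ‖A (y - q)‖ := by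
        calc ‖A y‖ = ‖A q + A (y - q)‖ := by congr 1; rw [← map_add]; congr 1; abel
          _ ≤ ‖A q‖ + ‖A (y - q)‖ := norm_add_le _ _
      have h2 : ‖A (y - q)‖ ≤ K * (ε / 4) := by
        calc ‖A (y - q)‖ ≤ K * ‖y - q‖ := hAr _ hsub
          _ ≤ K * (ε / 4) := mul_le_mul_of_nonneg_left hqd hK0
      linarith [hAq.2]
    have hKle : K ≤ 1 + ε + K * (ε / 4) := by
      apply csSup_le hne
      rintro _ ⟨y, ⟨hy, hy1⟩, rfl⟩
      exact hstep y hy hy1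
    have hK2 : K ≤ 1 + 2 * ε := by nlinarith
    constructor
    · obtain ⟨q, hqQ, hqd⟩ := hnet x hx hx1
      have hqS := (hQunit q hqQ).1
      have hAq := hQiso q hqQ
      have hsub : (x - q) ∈ S := S.sub_mem hx hqS
      have h1 : ‖A q‖ ≤ ‖A x‖ + ‖A (x - q)‖ := by
        calc ‖A q‖ = ‖A x - A (x - q)‖ := by congr 1; rw [← map_sub]; congr 1; abel
          _ ≤ ‖A x‖ + ‖A (x - q)‖ := norm_sub_le _ _
      have h2 : ‖A (x - q)‖ ≤ K * (ε / 4) := by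
        calc ‖A (x - q)‖ ≤ K * ‖x - q‖ := hAr _ hsub
          _ ≤ K * (ε / 4) := mul_le_mul_of_nonneg_left hqd hK0
      nlinarith [hAq.1]
    · exact le_trans (hleK x hx hx1) hK2
  -- general case
  intro x hx
  rcases eq_or_ne x 0 with rfl | hx0
  · simp
  · have hnx : (0:ℝ) < ‖x‖ := norm_pos_iff.mpr hx0
    set u : EuclideanSpace ℂ (Fin N) := (‖x‖⁻¹ : ℂ) • x with hu
    have huS : u ∈ S := S.smul_mem _ hx
    have hun : ‖u‖ = 1 := by
      rw [hu, norm_smul]; simp [hnx.ne']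
    obtain ⟨hl, hr⟩ := key u huS hun
    have hAu : ‖A u‖ = ‖x‖⁻¹ * ‖A x‖ := by
      rw [hu, map_smul, norm_smul]; simp
    rw [hAu] at hl hr
    constructor
    · have := mul_le_mul_of_nonneg_right hl hnx.le
      calc (1 - 2 * ε) * ‖x‖ ≤ (‖x‖⁻¹ * ‖A x‖) * ‖x‖ := this
        _ = ‖A x‖ := by field_simp
    · have := mul_le_mul_of_nonneg_right hr hnx.le
      calc ‖A x‖ = (‖x‖⁻¹ * ‖A x‖) * ‖x‖ := by field_simp
        _ ≤ (1 + 2 * ε) * ‖x‖ := this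
end
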